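/- Let q be a positive integer and h(x) = x^4 + a x^3 + b x^2 + a q x + q^2 a q-Weil polynomial of degree 4. Then h has a real root if and only if |a| = 4√q or b = −2q + 2√q·|a|. -/

import Mathlib

open Polynomial

/-- `h` is a `q`-Weil polynomial of degree `2*g`: its complex roots consist of
`g` conjugate pairs, each of complex absolute value `√q`. -/
def IsWeil (q g : ℕ) (h : Polynomial ℤ) : Prop :=
  ∃ w : Fin g → ℂ,
    (∀ i, ‖w i‖ = Real.sqrt q) ∧
    h.map (Int.castRingHom ℂ) =
      ∏ i, ((Polynomial.X - Polynomial.C (w i)) *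
            (Polynomial.X - Polynomial.C ((starRingEnd ℂ) (w i))))

set_option maxHeartbeats 4000000 in
theorem stmt16 (q : ℕ) (hq : 0 < q) (a b : ℤ)
    (hW : IsWeil q 2
      (X ^ 4 + C a * X ^ 3 + C b * X ^ 2 + C (a * q) * X + C ((q : ℤ) ^ 2))) :
    (∃ x : ℝ, Polynomial.aeval x
        (X ^ 4 + C a * X ^ 3 + C b * X ^ 2 + C (a * q) * X + C ((q : ℤ) ^ 2)) = 0) ↔
      (|(a : ℝ)| = 4 * Real.sqrt q ∨
        (b : ℝ) = -2 * q + 2 * Real.sqrt q * |(a : ℝ)|) := by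
  obtain ⟨w, habs, heq⟩ := hW
  set r : ℝ := Real.sqrt q with hrdef
  have hq0 : (0:ℝ) ≤ (q:ℝ) := by positivity
  have hr0 : 0 < r := Real.sqrt_pos.2 (by exact_mod_cast hq)
  have hrq : r * r = (q:ℝ) := Real.mul_self_sqrt hq0
  set s0 : ℝ := 2 * (w 0).re with hs0def
  set s1 : ℝ := 2 * (w 1).re with hs1def
  -- conjugate facts
  have hQ : ∀ i, w i * (starRingEnd ℂ) (w i) = (q : ℂ) := by
    intro i
    rw [Complex.mul_conj]
    rw [Complex.normSq_eq_norm_sq, habs i]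
    norm_cast
    rw [Real.sq_sqrt hq0]
  have hS0 : w 0 + (starRingEnd ℂ) (w 0) = ((s0 : ℝ) : ℂ) := by
    rw [Complex.add_conj]
  have hS1 : w 1 + (starRingEnd ℂ) (w 1) = ((s1 : ℝ) : ℂ) := by
    rw [Complex.add_conj]
  -- bounds
  have hb0 : |s0| ≤ 2 * r := by
    have h1 := Complex.abs_re_le_norm (w 0)
    rw [habs 0] at h1
    rw [hs0def, abs_mul, abs_two]
    linarith
  have hb1 : |s1| ≤ 2 * r := by
    have h1 := Complex.abs_re_le_norm (w 1)
    rw [habs 1] at h1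
    rw [hs1def, abs_mul, abs_two]
    linarith
  -- rewrite product
  have hprod : (∏ i, ((X - C (w i)) * (X - C ((starRingEnd ℂ) (w i))))) =
      X^4 + C (-(((s0:ℂ)) + (s1:ℂ))) * X^3
        + C ((s0:ℂ) * (s1:ℂ) + (q:ℂ) + (q:ℂ)) * X^2
        + C (-(((s0:ℂ)) * (q:ℂ) + ((s1:ℂ)) * (q:ℂ))) * X
        + C ((q:ℂ) * (q:ℂ)) := by
    rw [Fin.prod_univ_two]
    simp only [show ∀ α β : ℂ, (X - C α) * (X - C β) = X^2 - C (α + β) * X + C (α * β) from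
      fun α β => by simp only [map_add, map_mul]; ring]
    rw [hS0, hS1, hQ 0, hQ 1]
    simp only [map_add, map_mul, map_neg]
    ring
  rw [hprod] at heq
  have cL3 : ((X ^ 4 + C a * X ^ 3 + C b * X ^ 2 + C (a * q) * X
      + C ((q : ℤ) ^ 2)).map (Int.castRingHom ℂ)).coeff 3 = (a:ℂ) := by
    rw [coeff_map]
    simp only [coeff_add, coeff_C_mul, coeff_X_pow, coeff_C, coeff_X]
    norm_num
  have cL2 : ((X ^ 4 + C a * X ^ 3 + C b * X ^ 2 + C (a * q) * X
      + C ((q : ℤ) ^ 2)).map (Int.castRingHom ℂ)).coeff 2 = (b:ℂ) := by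
    rw [coeff_map]
    simp only [coeff_add, coeff_C_mul, coeff_X_pow, coeff_C, coeff_X]
    norm_num
  have e3 : (a : ℂ) = -((s0:ℂ) + (s1:ℂ)) := by
    have h := congrArg (fun p => p.coeff 3) heq
    rw [cL3] at h
    rw [h]
    simp only [coeff_add, coeff_C_mul, coeff_X_pow, coeff_C, coeff_X]
    norm_num
  have e2 : (b : ℂ) = (s0:ℂ) * (s1:ℂ) + (q:ℂ) + (q:ℂ) := by
    have h := congrArg (fun p => p.coeff 2) heq
    rw [cL2] at h
    rw [h]
    simp only [coeff_add, coeff_C_mul, coeff_X_pow, coeff_C, coeff_X]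
    norm_num
  have ha : (a : ℝ) = -(s0 + s1) := by exact_mod_cast e3
  have hbr : (b : ℝ) = s0 * s1 + 2 * q := by
    have : (b : ℂ) = ((s0 * s1 + 2 * q : ℝ) : ℂ) := by push_cast; rw [e2]; ring
    exact_mod_cast this
  have haabs : |(a:ℝ)| = |s0 + s1| := by rw [ha, abs_neg]
  -- factorization of the evaluation
  have haev : ∀ x : ℝ, (Polynomial.aeval x
      (X ^ 4 + C a * X ^ 3 + C b * X ^ 2 + C (a * q) * X + C ((q : ℤ) ^ 2)) : ℝ) =
      (x^2 - s0*x + q) * (x^2 - s1*x + q) := by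
    intro x
    simp only [map_add, map_mul, map_pow, aeval_X, aeval_C]
    simp only [algebraMap_int_eq, eq_intCast]
    push_cast
    rw [ha, hbr]
    ring
  -- helper: root from s^2 = 4q
  have root_of : ∀ s : ℝ, s^2 = 4*q → ∃ x : ℝ, x^2 - s*x + q = 0 := by
    intro s hs
    exact ⟨s/2, by nlinarith⟩
  constructor
  · rintro ⟨x, hx⟩
    rw [haev x] at hx
    right
    have key : ∀ s t : ℝ, |s| ≤ 2*r → |t| ≤ 2*r → x^2 - s*x + q = 0 →
        s*t + 2*q = -2*q + 2*r*|s+t| := by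
      intro s t hsb htb h0
      have hsb' := abs_le.1 hsb
      have htb' := abs_le.1 htb
      have hs2le : s^2 ≤ 4*q := by nlinarith
      have hs2ge : s^2 ≥ 4*q := by nlinarith [sq_nonneg (s - 2*x)]
      have hcases : (s - 2*r) * (s + 2*r) = 0 := by nlinarith
      rcases mul_eq_zero.1 hcases with h | h
      · have hs : s = 2*r := by linarith
        rw [hs, abs_of_nonneg (by linarith : (0:ℝ) ≤ 2*r + t)]
        nlinarith
      · have hs : s = -(2*r) := by linarith
        rw [hs, abs_of_nonpos (by linarith : -(2*r) + t ≤ 0)]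
        nlinarith
    rcases mul_eq_zero.1 hx with h0 | h0
    · rw [hbr, haabs]
      exact key s0 s1 hb0 hb1 h0
    · rw [hbr, haabs, show s0 + s1 = s1 + s0 by ring,
        show s0 * s1 = s1 * s0 by ring]
      exact key s1 s0 hb1 hb0 h0
  · intro hcase
    have hb0' := abs_le.1 hb0
    have hb1' := abs_le.1 hb1
    have hroot : ∃ x : ℝ, (x^2 - s0*x + q) * (x^2 - s1*x + q) = 0 := by
      rcases hcase with hA | hB
      · rw [haabs] at hA
        rcases (abs_eq (by linarith : (0:ℝ) ≤ 4*r)).1 hA with h | h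
        · obtain ⟨x, hx⟩ := root_of s0 (by nlinarith)
          exact ⟨x, by rw [hx, zero_mul]⟩
        · obtain ⟨x, hx⟩ := root_of s0 (by nlinarith)
          exact ⟨x, by rw [hx, zero_mul]⟩
      · rw [hbr, haabs] at hB
        rcases le_or_gt 0 (s0 + s1) with hpos | hneg
        · rw [abs_of_nonneg hpos] at hB
          have hz : (s0 - 2*r) * (s1 - 2*r) = 0 := by nlinarith
          rcases mul_eq_zero.1 hz with h | h
          · obtain ⟨x, hx⟩ := root_of s0 (by nlinarith)
            exact ⟨x, by rw [hx, zero_mul]⟩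
          · obtain ⟨x, hx⟩ := root_of s1 (by nlinarith)
            exact ⟨x, by rw [hx, mul_zero]⟩
        · rw [abs_of_neg hneg] at hB
          have hz : (s0 + 2*r) * (s1 + 2*r) = 0 := by nlinarith
          rcases mul_eq_zero.1 hz with h | h
          · obtain ⟨x, hx⟩ := root_of s0 (by nlinarith)
            exact ⟨x, by rw [hx, zero_mul]⟩
          · obtain ⟨x, hx⟩ := root_of s1 (by nlinarith)
            exact ⟨x, by rw [hx, mul_zero]⟩
    obtain ⟨x, hx⟩ := hroot
    exact ⟨x, by rw [haev x, hx]⟩
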